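/- The double sum over all pairs of integers m ≥ n ≥ 1 of 1/(m² n) converges and equals 2ζ(3). -/

import Mathlib

open Finset Filter Topology

noncomputable section


private def hh (k : ℕ) : ℝ := (((k : ℝ) + 1) ^ ((3:ℝ)/2))⁻¹

private lemma hh_summable : Summable hh := by
  have h : Summable (fun n : ℕ => 1 / (n : ℝ) ^ ((3:ℝ)/2)) :=
    Real.summable_one_div_nat_rpow.mpr (by norm_num)
  have h2 := (summable_nat_add_iff 1).mpr h
  apply h2.congr
  intro k
  simp only [hh, one_div]
  push_cast
  ring_nf

private lemma hh_nonneg (k : ℕ) : 0 ≤ hh k := by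
  unfold hh; positivity

private lemma hh_bound {i j : ℕ} {d : ℝ} (hd : 0 < d)
    (h : ((((i:ℝ)+1) * ((j:ℝ)+1)) ^ (3:ℕ)) ≤ d ^ (2:ℕ)) : 1 / d ≤ hh i * hh j := by
  set x : ℝ := ((i:ℝ)+1) * ((j:ℝ)+1) with hx
  have hx0 : (0:ℝ) ≤ x := by positivity
  have hmul : hh i * hh j = (x ^ ((3:ℝ)/2))⁻¹ := by
    rw [hh, hh, ← mul_inv, ← Real.mul_rpow (by positivity) (by positivity)]
  have hle : x ^ ((3:ℝ)/2) ≤ d := by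
    have e1 : x ^ ((3:ℝ)/2) = (x ^ (3:ℕ)) ^ ((1:ℝ)/2) := by
      rw [← Real.rpow_natCast x 3, ← Real.rpow_mul hx0]; norm_num
    have e2 : (d ^ (2:ℕ)) ^ ((1:ℝ)/2) = d := by
      rw [← Real.rpow_natCast d 2, ← Real.rpow_mul hd.le]; norm_num
    rw [e1, ← e2]
    exact Real.rpow_le_rpow (by positivity) h (by norm_num)
  rw [hmul, one_div]
  exact inv_anti₀ (by positivity) hle



private lemma tele (a : ℕ) :
    HasSum (fun b : ℕ => 1/((b:ℝ)+1) - 1/((b:ℝ)+(a:ℝ)+1))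
      (∑ i ∈ Finset.range a, 1/((i:ℝ)+1)) := by
  set f : ℕ → ℝ := fun k => 1/((k:ℝ)+1) with hf
  have hfe : ∀ b : ℕ, 1/((b:ℝ)+1) - 1/((b:ℝ)+(a:ℝ)+1) = f b - f (b + a) := by
    intro b; simp only [hf]; push_cast; ring_nf
  have hnn : ∀ b : ℕ, 0 ≤ f b - f (b + a) := by
    intro b
    have h1 : f (b + a) ≤ f b := by
      apply one_div_le_one_div_of_le
      · positivity
      · push_cast; linarith [Nat.cast_nonneg (α := ℝ) a]
    linarith
  have key : HasSum (fun b : ℕ => f b - f (b + a)) (∑ i ∈ Finset.range a, f i) := by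
    rw [hasSum_iff_tendsto_nat_of_nonneg hnn]
    have hps : ∀ N : ℕ, ∑ b ∈ range N, (f b - f (b + a)) =
        ∑ i ∈ range a, f i - ∑ i ∈ range a, f (N + i) := by
      intro N
      rw [Finset.sum_sub_distrib]
      have h1 : ∑ b ∈ range N, f (b + a) = ∑ b ∈ range N, f (a + b) := by
        apply Finset.sum_congr rfl; intro b _; rw [Nat.add_comm]
      have h2 := Finset.sum_range_add f a N
      have h3 := Finset.sum_range_add f N a
      rw [Nat.add_comm a N] at h2
      rw [h1]
      linarith
    simp only [hps]
    have hf0 : Tendsto f atTop (𝓝 0) := by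
      simpa [hf] using (tendsto_one_div_add_atTop_nhds_zero_nat : Tendsto (fun n : ℕ => 1 / ((n : ℝ) + 1)) atTop (𝓝 0))
    have hsmall : Tendsto (fun N : ℕ => ∑ i ∈ range a, f (N + i)) atTop (𝓝 0) := by
      have : Tendsto (fun N : ℕ => ∑ i ∈ range a, f (N + i)) atTop (𝓝 (∑ i ∈ range a, (0:ℝ))) := by
        apply tendsto_finset_sum
        intro i _
        exact hf0.comp (tendsto_add_atTop_nat i)
      simpa using this
    simpa using tendsto_const_nhds.sub hsmall
  simpa only [hfe] using key


private def FT (p : ℕ × ℕ) : ℝ :=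
  1 / (((p.1:ℝ)+1) * ((p.2:ℝ)+1) * ((p.1:ℝ)+(p.2:ℝ)+2))

private def FS (p : ℕ × ℕ) : ℝ :=
  1 / (((p.1:ℝ)+(p.2:ℝ)+1)^2 * ((p.2:ℝ)+1))

private def FA (p : ℕ × ℕ) : ℝ :=
  1 / (((p.1:ℝ)+(p.2:ℝ)+2)^2 * ((p.2:ℝ)+1))

private def cc (m : ℕ) : ℝ :=
  (1/((m:ℝ)+1)^2) * ∑ i ∈ Finset.range (m+1), 1/((i:ℝ)+1)


private lemma key_ineq {x y m : ℝ} (hx : 0 < x) (hy : 0 < y) (hxm : x ≤ m) (hym : y ≤ m) :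
    (x*y)^3 ≤ (m^2*y)^2 := by
  have hm : 0 < m := lt_of_lt_of_le hx hxm
  calc (x*y)^3 = x^3 * y^3 := by ring
    _ ≤ m^3 * y^3 := by
        have h1 : x^3 ≤ m^3 := pow_le_pow_left₀ hx.le hxm 3
        have h3 : (0:ℝ) ≤ y^3 := by positivity
        nlinarith
    _ = (m^3 * y^2) * y := by ring
    _ ≤ (m^3 * y^2) * m := by
        have : (0:ℝ) ≤ m^3 * y^2 := by positivity
        exact mul_le_mul_of_nonneg_left hym this
    _ = (m^2*y)^2 := by ring

private lemma key_ineq2 {x y : ℝ} (hx : 0 < x) (hy : 0 < y) :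
    (x*y)^3 ≤ (x*y*(x+y))^2 := by
  have h1 : x*y ≤ (x+y)^2 := by nlinarith [sq_nonneg (x-y), mul_pos hx hy]
  calc (x*y)^3 = (x*y)^2 * (x*y) := by ring
    _ ≤ (x*y)^2 * (x+y)^2 := by
        have : (0:ℝ) ≤ (x*y)^2 := by positivity
        exact mul_le_mul_of_nonneg_left h1 this
    _ = (x*y*(x+y))^2 := by ring


private lemma hh2_summable : Summable (fun p : ℕ × ℕ => hh p.1 * hh p.2) :=
  hh_summable.mul_of_nonneg hh_summable hh_nonneg hh_nonneg

private lemma FT_summable : Summable FT := by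
  apply Summable.of_nonneg_of_le _ _ hh2_summable
  · intro p; unfold FT; positivity
  · rintro ⟨i, j⟩
    apply hh_bound (by positivity)
    have := key_ineq2 (x := (i:ℝ)+1) (y := (j:ℝ)+1) (by positivity) (by positivity)
    push_cast
    nlinarith [this]

private lemma FS_summable : Summable FS := by
  apply Summable.of_nonneg_of_le _ _ hh2_summable
  · intro p; unfold FS; positivity
  · rintro ⟨i, j⟩
    apply hh_bound (by positivity)
    have := key_ineq (x := (i:ℝ)+1) (y := (j:ℝ)+1) (m := (i:ℝ)+(j:ℝ)+1) (by positivity)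
      (by positivity) (by linarith [Nat.cast_nonneg (α := ℝ) j]) (by linarith [Nat.cast_nonneg (α := ℝ) i])
    push_cast
    nlinarith [this]

private lemma FA_summable : Summable FA := by
  apply Summable.of_nonneg_of_le _ _ hh2_summable
  · intro p; unfold FA; positivity
  · rintro ⟨i, j⟩
    apply hh_bound (by positivity)
    have := key_ineq (x := (i:ℝ)+1) (y := (j:ℝ)+1) (m := (i:ℝ)+(j:ℝ)+2) (by positivity)
      (by positivity) (by linarith [Nat.cast_nonneg (α := ℝ) j]) (by linarith [Nat.cast_nonneg (α := ℝ) i])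
    push_cast
    nlinarith [this]




/-- inner telescoping sum for FT -/
private lemma FT_row (i : ℕ) : HasSum (fun j : ℕ => FT (i, j)) (cc i) := by
  have h := (tele (i+1)).mul_left (1/((i:ℝ)+1)^2)
  have he : ∀ j : ℕ, (1/((i:ℝ)+1)^2) * (1/((j:ℝ)+1) - 1/((j:ℝ)+((i+1:ℕ):ℝ)+1)) = FT (i, j) := by
    intro j
    unfold FT
    have h1 : ((j:ℝ)+1) ≠ 0 := by positivity
    have h2 : ((i:ℝ)+1) ≠ 0 := by positivity
    have h3 : ((i:ℝ)+(j:ℝ)+2) ≠ 0 := by positivity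
    push_cast
    field_simp
    ring
  have hc : (1/((i:ℝ)+1)^2) * (∑ k ∈ Finset.range (i+1), 1/((k:ℝ)+1)) = cc i := rfl
  rw [hc] at h
  simpa only [he] using h

private def eSig : (Σ m : ℕ, Fin (m+1)) ≃ ℕ × ℕ where
  toFun x := (x.1 - x.2, x.2)
  invFun p := ⟨p.1 + p.2, ⟨p.2, by omega⟩⟩
  left_inv := by
    rintro ⟨m, j⟩
    have hj : (j:ℕ) ≤ m := by omega
    refine Sigma.ext (by simp; omega) ?_
    refine (Fin.heq_ext_iff (by simp; omega)).mpr ?_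
    simp
  right_inv := by
    rintro ⟨i, j⟩
    simp

private lemma FS_row (m : ℕ) : HasSum (fun j : Fin (m+1) => FS (eSig ⟨m, j⟩)) (cc m) := by
  have key : ∑ j : Fin (m+1), FS (eSig ⟨m, j⟩) = cc m := by
    rw [cc, Finset.mul_sum,
      ← Fin.sum_univ_eq_sum_range (fun j => (1/((m:ℝ)+1)^2) * (1/((j:ℝ)+1))) (m+1)]
    apply Finset.sum_congr rfl
    intro j _
    have hj : (j:ℕ) ≤ m := by omega
    simp only [eSig, Equiv.coe_fn_mk, FS]
    have hc : ((m - (j:ℕ) : ℕ):ℝ) = (m:ℝ) - ((j:ℕ):ℝ) := by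
      rw [Nat.cast_sub hj]
    rw [hc]
    have h1 : ((j:ℕ):ℝ)+1 ≠ 0 := by positivity
    have h2 : ((m:ℝ)+1) ≠ 0 := by positivity
    have h3 : (m:ℝ) - ((j:ℕ):ℝ) + ((j:ℕ):ℝ) + 1 = (m:ℝ) + 1 := by ring
    rw [h3]; rw [one_div, mul_inv, one_div, one_div]
  rw [← key]
  exact hasSum_fintype _

private lemma FS_grouped : HasSum cc (∑' p, FS p) := by
  have h : HasSum (fun x : Σ m : ℕ, Fin (m+1) => FS (eSig x)) (∑' p, FS p) :=
    eSig.hasSum_iff.mpr FS_summable.hasSum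
  exact h.sigma (fun m => FS_row m)

private lemma FT_grouped : HasSum cc (∑' p, FT p) :=
  FT_summable.hasSum.prod_fiberwise (fun i => FT_row i)

private lemma FT_eq_FA_add (p : ℕ × ℕ) : FT p = FA p + FA p.swap := by
  obtain ⟨i, j⟩ := p
  simp only [FT, FA, Prod.swap_prod_mk]
  have h1 : ((i:ℝ)+1) ≠ 0 := by positivity
  have h2 : ((j:ℝ)+1) ≠ 0 := by positivity
  have h3 : ((i:ℝ)+(j:ℝ)+2) ≠ 0 := by positivity
  have h4 : ((j:ℝ)+(i:ℝ)+2) ≠ 0 := by positivity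
  field_simp
  ring

private lemma FA_swap_summable : Summable (fun p : ℕ × ℕ => FA p.swap) :=
  FA_summable.prod_symm

private lemma tsum_FT_eq : (∑' p, FT p) = 2 * ∑' p, FA p := by
  have h1 : (∑' p, FT p) = (∑' p, FA p) + ∑' p : ℕ × ℕ, FA p.swap := by
    rw [← Summable.tsum_add FA_summable FA_swap_summable]
    exact tsum_congr FT_eq_FA_add
  have h2 : (∑' p : ℕ × ℕ, FA p.swap) = ∑' p, FA p :=
    (Equiv.prodComm ℕ ℕ).tsum_eq FA
  rw [h1, h2]; ring

private lemma tsum_FS_split :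
    (∑' p, FS p) = (∑' n : ℕ, (1:ℝ) / ((n:ℝ)+1)^3) + ∑' p, FA p := by
  have hg : HasSum (fun i => ∑' j, FS (i, j)) (∑' p, FS p) :=
    FS_summable.hasSum.prod_fiberwise (fun i => (FS_summable.prod_factor i).hasSum)
  have h0 : (∑' p, FS p) = (∑' j, FS (0, j)) + ∑' i, ∑' j, FS (i+1, j) := by
    rw [← hg.tsum_eq]
    exact Summable.tsum_eq_zero_add hg.summable
  have hz : (∑' j, FS (0, j)) = ∑' n : ℕ, (1:ℝ) / ((n:ℝ)+1)^3 := by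
    apply tsum_congr
    intro j
    simp only [FS]
    push_cast
    ring_nf
  have hA : (∑' i, ∑' j, FS (i+1, j)) = ∑' p, FA p := by
    have he : ∀ i j : ℕ, FS (i+1, j) = FA (i, j) := by
      intro i j
      simp only [FS, FA]
      push_cast
      ring_nf
    calc (∑' i, ∑' j, FS (i+1, j)) = ∑' i, ∑' j, FA (i, j) := by
          exact tsum_congr fun i => tsum_congr fun j => he i j
      _ = ∑' p, FA p := (Summable.tsum_prod' FA_summable fun i => FA_summable.prod_factor i).symm
  rw [h0, hz, hA]

private def eS : ℕ × ℕ ≃ {q : ℕ × ℕ // 1 ≤ q.2 ∧ q.2 ≤ q.1} where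
  toFun p := ⟨(p.1 + p.2 + 1, p.2 + 1), by omega⟩
  invFun q := (q.1.1 - q.1.2, q.1.2 - 1)
  left_inv := by
    rintro ⟨i, j⟩
    simp [Prod.ext_iff]
  right_inv := by
    rintro ⟨⟨m, n⟩, h⟩
    obtain ⟨h1, h2⟩ := h
    apply Subtype.ext
    simp only [Prod.ext_iff]
    constructor <;> omega

/-- The double sum over pairs m ≥ n ≥ 1 of 1/(m²n) converges and equals 2ζ(3). -/
theorem double_sum_eq_two_zeta_three :
    HasSum (fun p : {q : ℕ × ℕ // 1 ≤ q.2 ∧ q.2 ≤ q.1} =>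
        (1 : ℝ) / ((p.1.1 : ℝ) ^ 2 * (p.1.2 : ℝ)))
      (2 * ∑' n : ℕ, (1 : ℝ) / ((n : ℝ) + 1) ^ 3) := by
  have hTS : (∑' p, FT p) = ∑' p, FS p := FT_grouped.unique FS_grouped
  have h1 := tsum_FT_eq
  have h2 := tsum_FS_split
  have key : (∑' p, FS p) = 2 * ∑' n : ℕ, (1:ℝ) / ((n:ℝ)+1)^3 := by
    have hA : (∑' p, FA p) = ∑' n : ℕ, (1:ℝ) / ((n:ℝ)+1)^3 := by linarith
    linarith
  have hS := FS_summable.hasSum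
  rw [key] at hS
  refine (eS.hasSum_iff).mp ?_
  have hfe : ((fun p : {q : ℕ × ℕ // 1 ≤ q.2 ∧ q.2 ≤ q.1} =>
      (1 : ℝ) / ((p.1.1 : ℝ) ^ 2 * (p.1.2 : ℝ))) ∘ eS) = FS := by
    funext p
    obtain ⟨i, j⟩ := p
    simp only [Function.comp, eS, Equiv.coe_fn_mk, FS]
    push_cast
    ring_nf
  rw [hfe]
  exact hS

end
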